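/- Let B be an n×n matrix with strictly positive entries satisfying the Perron approximation ‖ρ^{-n}B^n − m m̃^T‖_max ≤ λ^n for large n (0 < λ < 1, ρ = ρ(B), m, m̃ the normalized right/left Perron vectors), and let x be nonnegative and nonzero. Then the ratio ‖B^{n+1}x‖_1 / ‖B^n x‖_1 converges to ρ exponentially quickly. -/

import Mathlib

open Matrix

/-- The spectral radius of a real square matrix: the supremum of the absolute
values of its complex eigenvalues. -/
noncomputable def specRad {V : Type} [Fintype V] [DecidableEq V] (A : Matrix V V ℝ) : ℝ :=
  sSup {x : ℝ | ∃ μ ∈ spectrum ℂ (A.map (algebraMap ℝ ℂ)), x = ‖μ‖}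


theorem stmt11 {n : ℕ} (B : Matrix (Fin n) (Fin n) ℝ)
    (hpos : ∀ i j, 0 < B i j)
    (ρ : ℝ) (hρ : ρ = specRad B)
    (m mt : Fin n → ℝ) (hm : ∀ i, 0 < m i) (hmt : ∀ i, 0 < mt i)
    (heig : B *ᵥ m = ρ • m) (heigL : mt ᵥ* B = ρ • mt)
    (hnorm : mt ⬝ᵥ m = 1)
    (lam : ℝ) (hlam0 : 0 < lam) (hlam1 : lam < 1)
    (happrox : ∃ N : ℕ, ∀ n' ≥ N, ∀ i j,
      |ρ⁻¹ ^ n' * (B ^ n') i j - m i * mt j| ≤ lam ^ n')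
    (x : Fin n → ℝ) (hx : ∀ i, 0 ≤ x i) (hx0 : x ≠ 0) :
    ∃ C > (0 : ℝ), ∃ μ : ℝ, 0 < μ ∧ μ < 1 ∧ ∃ N : ℕ, ∀ n' ≥ N,
      |(∑ i, |(B ^ (n' + 1) *ᵥ x) i|) / (∑ i, |(B ^ n' *ᵥ x) i|) - ρ| ≤ C * μ ^ n' := by
  classical
  obtain ⟨N, hN⟩ := happrox
  -- n is positive
  have hn0 : n ≠ 0 := by
    rintro rfl
    exact hx0 (Subsingleton.elim x 0)
  have hn : 0 < n := Nat.pos_of_ne_zero hn0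
  haveI : Nonempty (Fin n) := ⟨⟨0, hn⟩⟩
  -- ρ is positive
  have hρpos : 0 < ρ := by
    obtain ⟨i⟩ := (inferInstance : Nonempty (Fin n))
    have h1 : (B *ᵥ m) i = ρ * m i := by rw [heig]; simp
    have h2 : 0 < (B *ᵥ m) i := by
      simp only [mulVec, dotProduct]
      exact Finset.sum_pos (fun j _ => mul_pos (hpos i j) (hm j)) Finset.univ_nonempty
    nlinarith [hm i]
  have hρne : ρ ≠ 0 := ne_of_gt hρpos
  -- some x j is positive
  obtain ⟨j0, hj0⟩ : ∃ j, x j ≠ 0 := Function.ne_iff.mp hx0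
  have hj0' : 0 < x j0 := (hx j0).lt_of_ne (Ne.symm hj0)
  set S : ℝ := ∑ i, m i with hS
  set s : ℝ := ∑ j, mt j * x j with hs
  set X : ℝ := ∑ j, x j with hX
  have hSpos : 0 < S := Finset.sum_pos (fun i _ => hm i) Finset.univ_nonempty
  have hspos : 0 < s :=
    Finset.sum_pos' (fun j _ => mul_nonneg (hmt j).le (hx j))
      ⟨j0, Finset.mem_univ _, mul_pos (hmt j0) hj0'⟩
  have hXpos : 0 < X :=
    Finset.sum_pos' (fun j _ => hx j) ⟨j0, Finset.mem_univ _, hj0'⟩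
  have hKpos : 0 < (n : ℝ) * X := mul_pos (by exact_mod_cast hn) hXpos
  -- entries of B^k are nonnegative
  have hBpow : ∀ k i j, 0 ≤ (B ^ k) i j := by
    intro k
    induction k with
    | zero =>
      intro i j
      rw [pow_zero]
      rcases eq_or_ne i j with h | h <;> simp [Matrix.one_apply, h]
    | succ k ih =>
      intro i j
      rw [pow_succ, Matrix.mul_apply]
      exact Finset.sum_nonneg fun l _ => mul_nonneg (ih i l) (hpos l j).le
  set a : ℕ → ℝ := fun k => ∑ i, (B ^ k *ᵥ x) i with ha
  have hax : ∀ k, (∑ i, |(B ^ k *ᵥ x) i|) = a k := by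
    intro k
    refine Finset.sum_congr rfl fun i _ => abs_of_nonneg ?_
    simp only [mulVec, dotProduct]
    exact Finset.sum_nonneg fun j _ => mul_nonneg (hBpow k i j) (hx j)
  set d : ℕ → ℝ := fun k => ρ⁻¹ ^ k * a k with hd
  have had : ∀ k, a k = ρ ^ k * d k := by
    intro k
    simp only [hd]
    field_simp
    rw [_root_.one_div_pow, mul_assoc, mul_one_div_cancel (pow_ne_zero _ hρne), mul_one]
  -- main estimate
  have hest : ∀ k ≥ N, |d k - S * s| ≤ lam ^ k * ((n : ℝ) * X) := by
    intro k hk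
    have heq : d k - S * s = ∑ i, ∑ j, (ρ⁻¹ ^ k * (B ^ k) i j - m i * mt j) * x j := by
      simp only [hd, ha, mulVec, dotProduct, Finset.mul_sum]
      rw [hS, hs, Finset.sum_mul_sum, ← Finset.sum_sub_distrib]
      refine Finset.sum_congr rfl fun i _ => ?_
      rw [← Finset.sum_sub_distrib]
      refine Finset.sum_congr rfl fun j _ => ?_
      ring
    rw [heq]
    calc |∑ i, ∑ j, (ρ⁻¹ ^ k * (B ^ k) i j - m i * mt j) * x j|
        ≤ ∑ i, |∑ j, (ρ⁻¹ ^ k * (B ^ k) i j - m i * mt j) * x j| :=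
          Finset.abs_sum_le_sum_abs _ _
      _ ≤ ∑ i : Fin n, ∑ j, lam ^ k * x j := by
          refine Finset.sum_le_sum fun i _ => ?_
          refine le_trans (Finset.abs_sum_le_sum_abs _ _) (Finset.sum_le_sum fun j _ => ?_)
          rw [abs_mul, abs_of_nonneg (hx j)]
          exact mul_le_mul_of_nonneg_right (hN k hk i j) (hx j)
      _ = lam ^ k * ((n : ℝ) * X) := by
          rw [Finset.sum_const, ← Finset.mul_sum, Finset.card_univ, Fintype.card_fin,
            nsmul_eq_mul, hX]
          ring
  -- choose N1 s.t. lam^N1 * (n*X) < S*s/2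
  obtain ⟨N1, hN1⟩ : ∃ N1 : ℕ, lam ^ N1 < (S * s / 2) / ((n : ℝ) * X) :=
    exists_pow_lt_of_lt_one (by positivity) hlam1
  have hsmall : ∀ k ≥ N1, lam ^ k * ((n : ℝ) * X) < S * s / 2 := by
    intro k hk
    have h1 : lam ^ k ≤ lam ^ N1 := pow_le_pow_of_le_one hlam0.le hlam1.le hk
    have h2 : lam ^ k < (S * s / 2) / ((n : ℝ) * X) := lt_of_le_of_lt h1 hN1
    calc lam ^ k * ((n : ℝ) * X) < ((S * s / 2) / ((n : ℝ) * X)) * ((n : ℝ) * X) :=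
          mul_lt_mul_of_pos_right h2 hKpos
      _ = S * s / 2 := by field_simp
  refine ⟨4 * ρ * ((n : ℝ) * X) / (S * s), by positivity, lam, hlam0, hlam1,
    max N N1, fun n' hn' => ?_⟩
  have hn'N : n' ≥ N := le_trans (le_max_left _ _) hn'
  have hn'N1 : n' ≥ N1 := le_trans (le_max_right _ _) hn'
  have hd1 : |d n' - S * s| ≤ lam ^ n' * ((n : ℝ) * X) := hest n' hn'N
  have hd2 : |d (n' + 1) - S * s| ≤ lam ^ (n' + 1) * ((n : ℝ) * X) :=
    hest (n' + 1) (le_trans hn'N (Nat.le_succ _))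
  have hsm : lam ^ n' * ((n : ℝ) * X) < S * s / 2 := hsmall n' hn'N1
  have hdlb : S * s / 2 < d n' := by
    have := abs_le.mp hd1
    linarith
  have hdpos : 0 < d n' := lt_trans (by positivity) hdlb
  -- |d(n'+1) - d n'| ≤ 2 * lam^n' * (n*X)
  have hΔ : |d (n' + 1) - d n'| ≤ 2 * (lam ^ n' * ((n : ℝ) * X)) := by
    have h3 : lam ^ (n' + 1) ≤ lam ^ n' := pow_le_pow_of_le_one hlam0.le hlam1.le (Nat.le_succ _)
    have h4 : lam ^ (n' + 1) * ((n : ℝ) * X) ≤ lam ^ n' * ((n : ℝ) * X) :=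
      mul_le_mul_of_nonneg_right h3 hKpos.le
    calc |d (n' + 1) - d n'| = |(d (n' + 1) - S * s) + (S * s - d n')| := by ring_nf
      _ ≤ |d (n' + 1) - S * s| + |S * s - d n'| := abs_add_le _ _
      _ = |d (n' + 1) - S * s| + |d n' - S * s| := by rw [abs_sub_comm (S * s)]
      _ ≤ 2 * (lam ^ n' * ((n : ℝ) * X)) := by linarith
  rw [hax (n' + 1), hax n']
  have heq2 : a (n' + 1) / a n' - ρ = ρ * (d (n' + 1) - d n') / d n' := by
    rw [had (n' + 1), had n']
    have hρpow : (ρ : ℝ) ^ n' ≠ 0 := pow_ne_zero _ hρne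
    field_simp
    ring
  rw [heq2, abs_div, abs_mul, abs_of_pos hρpos, abs_of_pos hdpos]
  calc ρ * |d (n' + 1) - d n'| / d n'
      ≤ ρ * (2 * (lam ^ n' * ((n : ℝ) * X))) / (S * s / 2) := by
        refine div_le_div₀ (by positivity) ?_ (by positivity) hdlb.le
        exact mul_le_mul_of_nonneg_left hΔ hρpos.le
    _ = 4 * ρ * ((n : ℝ) * X) / (S * s) * lam ^ n' := by
        field_simp
        ring
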